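/- arXiv:2212.11719 — 4 statements merged into one kernel-verified Lean document; each statement's English description precedes it below -/
import Mathlib

section
/- Sequential composition inequality for KL divergence on FinStoch: for stochastic matrices f, f' : X → Y and g, g' : Y → Z between finite sets, defining D(f ∥ f') = max_{x∈X} D_KL(f_x ∥ f'_x), one has D(g∘f ∥ g'∘f') ≤ D(f ∥ f') + D(g ∥ g'), where (g∘f)(z|x) = ∑_y g(z|y)f(y|x). -/
open scoped BigOperators

def IsProb {X : Type*} [Fintype X] (p : X → ℝ) : Prop :=
  (∀ x, 0 ≤ p x) ∧ ∑ x, p x = 1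

noncomputable def KL {X : Type*} [Fintype X] (p q : X → ℝ) : EReal :=
  if ∀ x, q x = 0 → p x = 0 then
    (((∑ x, p x * Real.log (p x / q x)) : ℝ) : EReal)
  else ⊤

/-- Divergence between channels: supremum (= maximum, as the sets are finite and
nonempty) of the pointwise KL divergences over the inputs. -/
noncomputable def KLchan {X Y : Type*} [Fintype X] [Fintype Y] (f f' : X → Y → ℝ) : EReal :=
  ⨆ x, KL (f x) (f' x)

/-- Composition of stochastic matrices (Chapman–Kolmogorov). -/
noncomputable def comp {X Y Z : Type*} [Fintype Y]
    (g : Y → Z → ℝ) (f : X → Y → ℝ) : X → Z → ℝ :=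
  fun x z => ∑ y, g y z * f x y

lemma KL_ne_bot {X : Type*} [Fintype X] (p q : X → ℝ) : KL p q ≠ ⊥ := by
  unfold KL; split <;> simp

lemma KL_of_not_supp {X : Type*} [Fintype X] {p q : X → ℝ}
    (h : ¬ ∀ x, q x = 0 → p x = 0) : KL p q = ⊤ := by
  unfold KL; rw [if_neg h]

lemma KL_of_supp {X : Type*} [Fintype X] {p q : X → ℝ}
    (h : ∀ x, q x = 0 → p x = 0) :
    KL p q = (((∑ x, p x * Real.log (p x / q x)) : ℝ) : EReal) := by
  unfold KL; rw [if_pos h]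

/-- log-sum inequality. -/
lemma log_sum_ineq {Y : Type*} [Fintype Y] (a c : Y → ℝ)
    (ha : ∀ y, 0 ≤ a y) (hc : ∀ y, 0 ≤ c y) (h : ∀ y, c y = 0 → a y = 0) :
    (∑ y, a y) * Real.log ((∑ y, a y) / (∑ y, c y)) ≤ ∑ y, a y * Real.log (a y / c y) := by
  set A := ∑ y, a y with hA
  set C := ∑ y, c y with hC
  rcases eq_or_lt_of_le (Finset.sum_nonneg (fun y _ => ha y) : (0:ℝ) ≤ A) with h0 | hApos
  · have hz : ∀ y, a y = 0 := by
      intro y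
      have := (Finset.sum_eq_zero_iff_of_nonneg (fun y _ => ha y)).mp h0.symm
      exact this y (Finset.mem_univ y)
    have hA0 : A = 0 := Finset.sum_eq_zero (fun y _ => hz y)
    simp [hA0, hz]
  · have hCpos : 0 < C := by
      rcases eq_or_lt_of_le (Finset.sum_nonneg (fun y _ => hc y) : (0:ℝ) ≤ C) with h0 | h
      · exfalso
        have hz : ∀ y, c y = 0 := fun y =>
          (Finset.sum_eq_zero_iff_of_nonneg (fun y _ => hc y)).mp h0.symm y (Finset.mem_univ y)
        have : A = 0 := Finset.sum_eq_zero (fun y _ => h y (hz y))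
        exact absurd this hApos.ne'
      · exact h
    have key : ∀ y, a y - c y * (A / C) ≤ a y * Real.log (a y / c y) - a y * Real.log (A / C) := by
      intro y
      rcases eq_or_lt_of_le (ha y) with h0 | hay
      · have h0' : a y = 0 := h0.symm
        have : 0 ≤ c y * (A / C) := mul_nonneg (hc y) (div_nonneg hApos.le hCpos.le)
        simp [h0']
        linarith
      · have hcy : 0 < c y := by
          rcases eq_or_lt_of_le (hc y) with h0 | h; · exact absurd (h y h0.symm) hay.ne'
          exact h
        have ht : (0:ℝ) < a y * C / (c y * A) := by positivity
        have hlog : 1 - (a y * C / (c y * A))⁻¹ ≤ Real.log (a y * C / (c y * A)) :=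
          Real.one_sub_inv_le_log_of_pos ht
        have hsplit : Real.log (a y * C / (c y * A)) =
            Real.log (a y / c y) - Real.log (A / C) := by
          rw [Real.log_div (by positivity) (by positivity), Real.log_mul hay.ne' hCpos.ne',
            Real.log_mul hcy.ne' hApos.ne', Real.log_div hay.ne' hcy.ne',
            Real.log_div hApos.ne' hCpos.ne']
          ring
        rw [hsplit] at hlog
        have := mul_le_mul_of_nonneg_left hlog (ha y)
        calc a y - c y * (A / C) = a y * (1 - (a y * C / (c y * A))⁻¹) := by
              field_simp
          _ ≤ a y * (Real.log (a y / c y) - Real.log (A / C)) := this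
          _ = a y * Real.log (a y / c y) - a y * Real.log (A / C) := by ring
    have hsum : ∑ y, (a y - c y * (A / C)) ≤
        ∑ y, (a y * Real.log (a y / c y) - a y * Real.log (A / C)) :=
      Finset.sum_le_sum (fun y _ => key y)
    have h1 : ∑ y, (a y - c y * (A / C)) = 0 := by
      rw [Finset.sum_sub_distrib, ← Finset.sum_mul, ← hA, ← hC]
      field_simp
      ring
    have h2 : ∑ y, (a y * Real.log (a y / c y) - a y * Real.log (A / C))
        = (∑ y, a y * Real.log (a y / c y)) - A * Real.log (A / C) := by
      rw [Finset.sum_sub_distrib, ← Finset.sum_mul, ← hA]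
    rw [h1, h2] at hsum
    linarith


lemma real_main {Y Z : Type*} [Fintype Y] [Fintype Z]
    (p p' : Y → ℝ) (g g' : Y → Z → ℝ)
    (hp : IsProb p) (hp' : IsProb p') (hg : ∀ y, IsProb (g y)) (hg' : ∀ y, IsProb (g' y))
    (hsp : ∀ y, p' y = 0 → p y = 0) (hsg : ∀ y z, g' y z = 0 → g y z = 0)
    (B : ℝ) (hb : ∀ y, ∑ z, g y z * Real.log (g y z / g' y z) ≤ B) :
    ∑ z, (∑ y, g y z * p y) * Real.log ((∑ y, g y z * p y) / (∑ y, g' y z * p' y))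
      ≤ (∑ y, p y * Real.log (p y / p' y)) + B := by
  have step1 : ∑ z, (∑ y, g y z * p y) * Real.log ((∑ y, g y z * p y) / (∑ y, g' y z * p' y))
      ≤ ∑ z, ∑ y, (g y z * p y) * Real.log ((g y z * p y) / (g' y z * p' y)) := by
    refine Finset.sum_le_sum (fun z _ => ?_)
    refine log_sum_ineq _ _ (fun y => mul_nonneg ((hg y).1 z) (hp.1 y))
      (fun y => mul_nonneg ((hg' y).1 z) (hp'.1 y)) (fun y hy => ?_)
    rcases mul_eq_zero.mp hy with h | h
    · rw [hsg y z h, zero_mul]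
    · rw [hsp y h, mul_zero]
  have term_eq : ∀ y z, (g y z * p y) * Real.log ((g y z * p y) / (g' y z * p' y))
      = g y z * (p y * Real.log (p y / p' y)) + p y * (g y z * Real.log (g y z / g' y z)) := by
    intro y z
    rcases eq_or_lt_of_le (hp.1 y) with h0 | hpy
    · have h0' : p y = 0 := h0.symm
      simp [h0']
    rcases eq_or_lt_of_le ((hg y).1 z) with h0 | hgy
    · have h0' : g y z = 0 := h0.symm
      simp [h0']
    have hpy' : 0 < p' y := by
      rcases eq_or_lt_of_le (hp'.1 y) with h0 | h; · exact absurd (hsp y h0.symm) hpy.ne'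
      exact h
    have hgy' : 0 < g' y z := by
      rcases eq_or_lt_of_le ((hg' y).1 z) with h0 | h; · exact absurd (hsg y z h0.symm) hgy.ne'
      exact h
    have : (g y z * p y) / (g' y z * p' y) = (g y z / g' y z) * (p y / p' y) := by
      rw [div_mul_div_comm]
    rw [this, Real.log_mul (by positivity) (by positivity)]
    ring
  have step2 : ∑ z, ∑ y, (g y z * p y) * Real.log ((g y z * p y) / (g' y z * p' y))
      = (∑ y, p y * Real.log (p y / p' y))
        + ∑ y, p y * (∑ z, g y z * Real.log (g y z / g' y z)) := by
    rw [Finset.sum_comm]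
    have : ∀ y, ∑ z, (g y z * p y) * Real.log ((g y z * p y) / (g' y z * p' y))
        = p y * Real.log (p y / p' y) + p y * (∑ z, g y z * Real.log (g y z / g' y z)) := by
      intro y
      simp only [term_eq]
      rw [Finset.sum_add_distrib, ← Finset.sum_mul, ← Finset.mul_sum, (hg y).2, one_mul]
    rw [Finset.sum_congr rfl (fun y _ => this y), Finset.sum_add_distrib]
  have step3 : ∑ y, p y * (∑ z, g y z * Real.log (g y z / g' y z)) ≤ B := by
    calc ∑ y, p y * (∑ z, g y z * Real.log (g y z / g' y z))
        ≤ ∑ y, p y * B := Finset.sum_le_sum (fun y _ =>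
          mul_le_mul_of_nonneg_left (hb y) (hp.1 y))
      _ = B := by rw [← Finset.sum_mul, hp.2, one_mul]
  linarith [step1, step2 ▸ step1]


lemma KLchan_ne_bot {X Y : Type*} [Fintype X] [Fintype Y] [Nonempty X]
    (f f' : X → Y → ℝ) : KLchan f f' ≠ ⊥ := by
  obtain ⟨x⟩ := ‹Nonempty X›
  intro h
  have h1 : KL (f x) (f' x) ≤ KLchan f f' := le_iSup (fun x => KL (f x) (f' x)) x
  rw [h, le_bot_iff] at h1
  exact KL_ne_bot (f x) (f' x) h1

lemma pointwise_kl {X Y Z : Type*} [Fintype X] [Fintype Y] [Fintype Z] [Nonempty Y]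
    (f f' : X → Y → ℝ) (g g' : Y → Z → ℝ)
    (hf : ∀ x, IsProb (f x)) (hf' : ∀ x, IsProb (f' x))
    (hg : ∀ y, IsProb (g y)) (hg' : ∀ y, IsProb (g' y)) (x : X) :
    KL (comp g f x) (comp g' f' x) ≤ KL (f x) (f' x) + KLchan g g' := by
  by_cases hC : KLchan g g' = ⊤
  · rw [hC, EReal.add_top_of_ne_bot (KL_ne_bot _ _)]; exact le_top
  by_cases hA : KL (f x) (f' x) = ⊤
  · rw [hA, EReal.top_add_of_ne_bot (KLchan_ne_bot g g')]; exact le_top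
  have hsf : ∀ y, f' x y = 0 → f x y = 0 := by
    by_contra h; exact hA (KL_of_not_supp h)
  have hKLg_ne_top : ∀ y, KL (g y) (g' y) ≠ ⊤ := by
    intro y hy
    exact hC (top_le_iff.mp (hy ▸ le_iSup (fun y => KL (g y) (g' y)) y))
  have hsg : ∀ y z, g' y z = 0 → g y z = 0 := by
    intro y
    by_contra h
    exact hKLg_ne_top y (KL_of_not_supp h)
  obtain ⟨B, hB⟩ : ∃ B : ℝ, KLchan g g' = (B : EReal) := by
    lift KLchan g g' to ℝ using ⟨hC, KLchan_ne_bot g g'⟩ with B hB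
    exact ⟨B, rfl⟩
  have hb : ∀ y, ∑ z, g y z * Real.log (g y z / g' y z) ≤ B := by
    intro y
    have h1 := KL_of_supp (hsg y)
    have h2 : KL (g y) (g' y) ≤ KLchan g g' := le_iSup (fun y => KL (g y) (g' y)) y
    rw [h1, hB] at h2
    exact EReal.coe_le_coe_iff.mp h2
  have hsc : ∀ z, comp g' f' x z = 0 → comp g f x z = 0 := by
    intro z hz
    have hz' : ∀ y ∈ Finset.univ, g' y z * f' x y = 0 :=
      (Finset.sum_eq_zero_iff_of_nonneg
        (fun y _ => mul_nonneg ((hg' y).1 z) ((hf' x).1 y))).mp hz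
    refine Finset.sum_eq_zero (fun y _ => ?_)
    rcases mul_eq_zero.mp (hz' y (Finset.mem_univ y)) with h | h
    · rw [hsg y z h, zero_mul]
    · rw [hsf y h, mul_zero]
  rw [KL_of_supp hsc, KL_of_supp hsf, hB, ← EReal.coe_add, EReal.coe_le_coe_iff]
  exact real_main (f x) (f' x) g g' (hf x) (hf' x) hg hg' hsf hsg B hb

/-- Sequential composition inequality for KL divergence on FinStoch. -/
theorem kl_comp_le {X Y Z : Type*} [Fintype X] [Fintype Y] [Fintype Z]
    [Nonempty X] [Nonempty Y] [Nonempty Z]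
    (f f' : X → Y → ℝ) (g g' : Y → Z → ℝ)
    (hf : ∀ x, IsProb (f x)) (hf' : ∀ x, IsProb (f' x))
    (hg : ∀ y, IsProb (g y)) (hg' : ∀ y, IsProb (g' y)) :
    KLchan (comp g f) (comp g' f') ≤ KLchan f f' + KLchan g g' := by
  refine iSup_le fun x => ?_
  calc KL (comp g f x) (comp g' f' x)
      ≤ KL (f x) (f' x) + KLchan g g' := pointwise_kl f f' g g' hf hf' hg hg' x
    _ ≤ KLchan f f' + KLchan g g' :=
        add_le_add_left (le_iSup (fun x => KL (f x) (f' x)) x) _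
end

section
/- Generalized chain rule inequality for the Rényi divergence with α > 1 (finite case): for probability distributions p, p' on a finite set X and stochastic matrices f, f' : X → Y, the joints satisfy D_α(fp ∥ f'p') ≤ D_α(p ∥ p') + max_{x∈X} D_α(f_x ∥ f'_x). -/
open scoped BigOperators

/-- Rényi divergence of order `α`, valued in `EReal`, with value `⊤` when
absolute continuity fails. -/
noncomputable def RenyiD {X : Type*} [Fintype X] (α : ℝ) (p q : X → ℝ) : EReal :=
  if ∀ x, q x = 0 → p x = 0 then
    ((((α - 1)⁻¹ * Real.log (∑ x, p x ^ α / q x ^ (α - 1))) : ℝ) : EReal)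
  else ⊤

private lemma renyiD_ne_bot {X : Type*} [Fintype X] (α : ℝ) (p q : X → ℝ) :
    RenyiD α p q ≠ ⊥ := by
  unfold RenyiD
  split
  · exact EReal.coe_ne_bot _
  · simp

private lemma sum_div_rpow_pos {Y : Type*} [Fintype Y] {α : ℝ} (hα : 1 < α)
    {g g' : Y → ℝ} (hg : IsProb g) (hg' : ∀ y, 0 ≤ g' y)
    (hac : ∀ y, g' y = 0 → g y = 0) :
    0 < ∑ y, g y ^ α / g' y ^ (α - 1) := by
  have h1 : (∑ y, g y) ≠ 0 := by rw [hg.2]; norm_num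
  obtain ⟨y, -, hy⟩ := Finset.exists_ne_zero_of_sum_ne_zero h1
  have hgy : 0 < g y := lt_of_le_of_ne (hg.1 y) (Ne.symm hy)
  have hg'y : 0 < g' y := lt_of_le_of_ne (hg' y) (fun h => hy (hac y h.symm))
  have hterm : 0 < g y ^ α / g' y ^ (α - 1) :=
    div_pos (Real.rpow_pos_of_pos hgy α) (Real.rpow_pos_of_pos hg'y _)
  refine lt_of_lt_of_le hterm (Finset.single_le_sum (f := fun i => g i ^ α / g' i ^ (α - 1)) (fun i _ => ?_) (Finset.mem_univ y))
  exact div_nonneg (Real.rpow_nonneg (hg.1 i) _) (Real.rpow_nonneg (hg' i) _)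

/-- Generalized chain rule inequality for the Rényi divergence of order `α > 1`. -/
theorem renyi_joint_le {X Y : Type*} [Fintype X] [Fintype Y] [Nonempty X]
    (α : ℝ) (hα : 1 < α)
    (p p' : X → ℝ) (f f' : X → Y → ℝ)
    (hp : IsProb p) (hp' : IsProb p')
    (hf : ∀ x, IsProb (f x)) (hf' : ∀ x, IsProb (f' x)) :
    RenyiD α (fun xy : X × Y => p xy.1 * f xy.1 xy.2)
             (fun xy : X × Y => p' xy.1 * f' xy.1 xy.2)
      ≤ RenyiD α p p' + ⨆ x, RenyiD α (f x) (f' x) := by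
  classical
  by_cases hpac : ∀ x, p' x = 0 → p x = 0
  · by_cases hfac : ∀ x, ∀ y, f' x y = 0 → f x y = 0
    · -- Main case: absolute continuity everywhere.
      have hc : (0:ℝ) < (α - 1)⁻¹ := inv_pos.2 (by linarith)
      set S : X → ℝ := fun x => ∑ y, f x y ^ α / f' x y ^ (α - 1) with hSdef
      obtain ⟨x₀, hx₀⟩ := Finite.exists_max S
      have hSpos : ∀ x, 0 < S x := fun x =>
        sum_div_rpow_pos hα (hf x) (fun y => (hf' x).1 y) (hfac x)
      have hSp : 0 < ∑ x, p x ^ α / p' x ^ (α - 1) :=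
        sum_div_rpow_pos hα hp (fun x => hp'.1 x) hpac
      have hjprob : IsProb (fun xy : X × Y => p xy.1 * f xy.1 xy.2) := by
        constructor
        · intro xy; exact mul_nonneg (hp.1 _) ((hf _).1 _)
        · rw [Fintype.sum_prod_type]
          simp only [← Finset.mul_sum]
          calc ∑ x, p x * ∑ y, f x y = ∑ x, p x * 1 :=
                Finset.sum_congr rfl fun x _ => by rw [(hf x).2]
            _ = 1 := by simpa using hp.2
      have hjac : ∀ xy : X × Y, p' xy.1 * f' xy.1 xy.2 = 0 → p xy.1 * f xy.1 xy.2 = 0 := by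
        rintro ⟨x, y⟩ h
        rcases mul_eq_zero.mp h with h | h
        · rw [hpac x h]; ring
        · rw [hfac x y h]; ring
      have hjpos : 0 < ∑ xy : X × Y,
          (p xy.1 * f xy.1 xy.2) ^ α / (p' xy.1 * f' xy.1 xy.2) ^ (α - 1) :=
        sum_div_rpow_pos hα hjprob (fun xy => mul_nonneg (hp'.1 _) ((hf' _).1 _)) hjac
      have hsplit : (∑ xy : X × Y,
            (p xy.1 * f xy.1 xy.2) ^ α / (p' xy.1 * f' xy.1 xy.2) ^ (α - 1))
          = ∑ x, (p x ^ α / p' x ^ (α - 1)) * S x := by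
        rw [Fintype.sum_prod_type]
        refine Finset.sum_congr rfl fun x _ => ?_
        rw [hSdef, Finset.mul_sum]
        refine Finset.sum_congr rfl fun y _ => ?_
        rw [Real.mul_rpow (hp.1 x) ((hf x).1 y), Real.mul_rpow (hp'.1 x) ((hf' x).1 y),
          div_mul_div_comm]
      have hle : (∑ x, (p x ^ α / p' x ^ (α - 1)) * S x)
          ≤ (∑ x, p x ^ α / p' x ^ (α - 1)) * S x₀ := by
        rw [Finset.sum_mul]
        refine Finset.sum_le_sum fun x _ => ?_
        exact mul_le_mul_of_nonneg_left (hx₀ x)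
          (div_nonneg (Real.rpow_nonneg (hp.1 x) _) (Real.rpow_nonneg (hp'.1 x) _))
      have e1 : RenyiD α p p'
          = (((α - 1)⁻¹ * Real.log (∑ x, p x ^ α / p' x ^ (α - 1)) : ℝ) : EReal) := by
        unfold RenyiD; rw [if_pos hpac]
      have e2 : RenyiD α (f x₀) (f' x₀)
          = (((α - 1)⁻¹ * Real.log (S x₀) : ℝ) : EReal) := by
        unfold RenyiD; rw [if_pos (hfac x₀)]
      have e3 : RenyiD α (fun xy : X × Y => p xy.1 * f xy.1 xy.2)
            (fun xy : X × Y => p' xy.1 * f' xy.1 xy.2)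
          = (((α - 1)⁻¹ * Real.log (∑ xy : X × Y,
              (p xy.1 * f xy.1 xy.2) ^ α / (p' xy.1 * f' xy.1 xy.2) ^ (α - 1)) : ℝ) : EReal) := by
        unfold RenyiD; rw [if_pos hjac]
      rw [e1, e3]
      have key : (α - 1)⁻¹ * Real.log (∑ xy : X × Y,
            (p xy.1 * f xy.1 xy.2) ^ α / (p' xy.1 * f' xy.1 xy.2) ^ (α - 1))
          ≤ (α - 1)⁻¹ * Real.log (∑ x, p x ^ α / p' x ^ (α - 1))
            + (α - 1)⁻¹ * Real.log (S x₀) := by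
        rw [← mul_add]
        refine mul_le_mul_of_nonneg_left ?_ hc.le
        rw [← Real.log_mul hSp.ne' (hSpos x₀).ne']
        exact Real.log_le_log hjpos (by rw [hsplit]; exact hle)
      calc (((α - 1)⁻¹ * Real.log (∑ xy : X × Y,
              (p xy.1 * f xy.1 xy.2) ^ α / (p' xy.1 * f' xy.1 xy.2) ^ (α - 1)) : ℝ) : EReal)
          ≤ (((α - 1)⁻¹ * Real.log (∑ x, p x ^ α / p' x ^ (α - 1))
              + (α - 1)⁻¹ * Real.log (S x₀) : ℝ) : EReal) := EReal.coe_le_coe_iff.2 key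
        _ = (((α - 1)⁻¹ * Real.log (∑ x, p x ^ α / p' x ^ (α - 1)) : ℝ) : EReal)
              + (((α - 1)⁻¹ * Real.log (S x₀) : ℝ) : EReal) := EReal.coe_add _ _
        _ ≤ _ := add_le_add le_rfl
              (e2 ▸ le_iSup (fun x => RenyiD α (f x) (f' x)) x₀)
    · push_neg at hfac
      obtain ⟨x₀, y₀, h1, h2⟩ := hfac
      have htop : RenyiD α (f x₀) (f' x₀) = ⊤ := by
        unfold RenyiD
        rw [if_neg]
        push_neg
        exact ⟨y₀, h1, h2⟩
      have hsup : (⨆ x, RenyiD α (f x) (f' x)) = ⊤ :=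
        top_le_iff.mp (htop ▸ le_iSup (fun x => RenyiD α (f x) (f' x)) x₀)
      rw [hsup, EReal.add_top_of_ne_bot (renyiD_ne_bot α p p')]
      exact le_top
  · have h1 : RenyiD α p p' = ⊤ := by unfold RenyiD; rw [if_neg hpac]
    obtain ⟨x⟩ := ‹Nonempty X›
    have hsb : (⨆ x, RenyiD α (f x) (f' x)) ≠ ⊥ := fun h =>
      renyiD_ne_bot α (f x) (f' x)
        (le_bot_iff.mp (h ▸ le_iSup (fun x => RenyiD α (f x) (f' x)) x))
    rw [h1, EReal.top_add_of_ne_bot hsb]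
    exact le_top
end

section
/- For a probability measure p on a standard Borel space X, the pushforward of p along the diagonal map x ↦ (x,x) is absolutely continuous with respect to the product measure p⊗p if and only if p is discrete (a countable sum of point masses). -/
open MeasureTheory

/-- A measure is discrete if it is a countable weighted sum of Dirac measures. -/
def IsDiscreteMeasure {X : Type*} [MeasurableSpace X] (p : Measure X) : Prop :=
  ∃ (ι : Type) (_ : Countable ι) (x : ι → X) (c : ι → ENNReal),
    p = Measure.sum (fun i => c i • Measure.dirac (x i))

lemma aux_sum_dirac {X : Type*} [MeasurableSpace X] [MeasurableSingletonClass X]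
    (p : Measure X) (s : Set X) (hs : s.Countable) (hps : p sᶜ = 0) :
    p = Measure.sum (fun j : ↥s => p {(j : X)} • Measure.dirac (j : X)) := by
  have : Countable ↥s := hs.to_subtype
  ext t ht
  rw [Measure.sum_apply _ ht]
  have h1 : p t = p (t ∩ s) := (measure_inter_conull hps).symm
  have h2 : t ∩ s = ⋃ j : ↥s, t ∩ {(j : X)} := by
    ext y
    simp only [Set.mem_inter_iff, Set.mem_iUnion, Set.mem_singleton_iff]
    constructor
    · rintro ⟨hyt, hys⟩; exact ⟨⟨y, hys⟩, hyt, rfl⟩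
    · rintro ⟨j, hyt, rfl⟩; exact ⟨hyt, j.2⟩
  have h3 : p (⋃ j : ↥s, t ∩ {(j : X)}) = ∑' j : ↥s, p (t ∩ {(j : X)}) := by
    refine measure_iUnion ?_ (fun j => ht.inter (measurableSet_singleton _))
    intro i j hij
    refine Set.disjoint_left.2 fun y hyi hyj => hij ?_
    have : (i : X) = (j : X) := by
      rw [← hyi.2, ← hyj.2]
    exact Subtype.ext this
  rw [h1, h2, h3]
  refine tsum_congr fun j => ?_
  rw [Measure.smul_apply, Measure.dirac_apply' _ ht, smul_eq_mul]
  by_cases hjt : (j : X) ∈ t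
  · have : t ∩ {(j : X)} = {(j : X)} := by
      ext y; simp only [Set.mem_inter_iff, Set.mem_singleton_iff]
      exact ⟨fun h => h.2, fun h => ⟨h ▸ hjt, h⟩⟩
    rw [this, Set.indicator_of_mem hjt]; simp
  · have : t ∩ {(j : X)} = ∅ := by
      ext y; simp only [Set.mem_inter_iff, Set.mem_singleton_iff, Set.mem_empty_iff_false]
      exact ⟨fun h => absurd (h.2 ▸ h.1) hjt, False.elim⟩
    rw [this, Set.indicator_of_notMem hjt]; simp

/-- The diagonal pushforward of `p` is absolutely continuous w.r.t. `p ⊗ p`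
iff `p` is discrete. -/
theorem copy_ac_iff_discrete {X : Type*} [MeasurableSpace X] [StandardBorelSpace X]
    (p : Measure X) [IsProbabilityMeasure p] :
    p.map (fun x => (x, x)) ≪ p.prod p ↔ IsDiscreteMeasure p := by
  letI := upgradeStandardBorel X
  have hdiagmap : Measurable (fun x : X => (x, x)) := measurable_id.prodMk measurable_id
  have hdiag : MeasurableSet {q : X × X | q.1 = q.2} :=
    measurable_fst.stronglyMeasurable.measurableSet_eq_fun measurable_snd.stronglyMeasurable
  constructor
  · intro hac
    have hmeas : Measurable (fun x : X => p {x}) := by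
      have h := measurable_measure_prodMk_left (ν := p) hdiag
      convert h using 2 with x
      congr 1
      ext y
      simp [eq_comm]
    set A : Set X := {x | p {x} = 0} with hA_def
    have hA : MeasurableSet A := hmeas (measurableSet_singleton 0)
    set S : Set (X × X) := (A ×ˢ Set.univ) ∩ {q : X × X | q.1 = q.2} with hS_def
    have hS : MeasurableSet S := (hA.prod MeasurableSet.univ).inter hdiag
    have hprod0 : p.prod p S = 0 := by
      rw [Measure.prod_apply hS]
      have hzero : ∀ x, p (Prod.mk x ⁻¹' S) = 0 := by
        intro x
        by_cases hx : x ∈ A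
        · have : Prod.mk x ⁻¹' S = {x} := by
            ext y
            simp [hS_def, Set.mem_prod, hx, eq_comm]
          rw [this]; exact hx
        · have : Prod.mk x ⁻¹' S = ∅ := by
            ext y
            simp [hS_def, Set.mem_prod, hx]
          rw [this]; simp
      simp [hzero]
    have h0 := hac hprod0
    rw [Measure.map_apply hdiagmap hS] at h0
    have hpre : (fun x : X => (x, x)) ⁻¹' S = A := by
      ext x; simp [hS_def, Set.mem_prod]
    rw [hpre] at h0
    -- atoms are countable
    have hcount : Set.Countable {x : X | p {x} ≠ 0} := by
      have h := Measure.countable_meas_level_set_pos (μ := p) (g := id) measurable_id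
      refine h.mono fun x hx => ?_
      simp only [Set.mem_setOf_eq] at hx ⊢
      have : {a : X | id a = x} = {x} := by ext y; simp [eq_comm]
      rw [this]
      exact pos_iff_ne_zero.2 hx
    set s : Set X := {x : X | p {x} ≠ 0} with hs_def
    have hps : p sᶜ = 0 := by
      have : sᶜ = A := by ext x; simp [hs_def, hA_def]
      rw [this]; exact h0
    obtain ⟨g, hg⟩ := (countable_iff_exists_injective ↥s).1 hcount.to_subtype
    set e : ↥(Set.range g) ≃ ↥s := (Equiv.ofInjective g hg).symm with he_def
    refine ⟨↥(Set.range g), inferInstance, fun i => ((e i : ↥s) : X),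
      fun i => p {((e i : ↥s) : X)}, ?_⟩
    have : Countable ↥s := hcount.to_subtype
    conv_lhs => rw [aux_sum_dirac p s hcount hps]
    ext t ht
    rw [Measure.sum_apply _ ht, Measure.sum_apply _ ht]
    exact (e.tsum_eq fun j : ↥s => (p {(j : X)} • Measure.dirac (j : X)) t).symm
  · rintro ⟨ι, hι, x, c, hp⟩
    refine Measure.AbsolutelyContinuous.mk fun S hS hS0 => ?_
    rw [Measure.map_apply hdiagmap hS]
    have key : ∀ i, c i ≠ 0 → (x i, x i) ∉ S := by
      intro i hci hmem
      have h1 : c i ≤ p {x i} := by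
        rw [hp, Measure.sum_apply _ (measurableSet_singleton _)]
        have : c i = (c i • Measure.dirac (x i)) {x i} := by
          simp [Measure.dirac_apply]
        rw [this]
        exact ENNReal.le_tsum i
      have h2 : p {x i} * p {x i} ≤ p.prod p S := by
        have hsub : ({x i} ×ˢ {x i} : Set (X × X)) ⊆ S := by
          rw [Set.singleton_prod_singleton, Set.singleton_subset_iff]
          exact hmem
        calc p {x i} * p {x i} = p.prod p ({x i} ×ˢ {x i}) := (Measure.prod_prod _ _).symm
          _ ≤ p.prod p S := measure_mono hsub
      rw [hS0, nonpos_iff_eq_zero, mul_self_eq_zero] at h2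
      exact hci (le_antisymm (h1.trans h2.le) zero_le)
    have hpre : MeasurableSet ((fun x : X => (x, x)) ⁻¹' S) := hdiagmap hS
    rw [hp, Measure.sum_apply _ hpre]
    refine ENNReal.tsum_eq_zero.2 fun i => ?_
    rw [Measure.smul_apply, Measure.dirac_apply' _ hpre, smul_eq_mul]
    by_cases hci : c i = 0
    · simp [hci]
    · have : x i ∉ (fun x : X => (x, x)) ⁻¹' S := fun h => key i hci h
      rw [Set.indicator_of_notMem this, mul_zero]
end

section
/- Total variation entropy in the standard Borel case: for a probability measure p on a standard Borel space X, the total variation distance between copy(p) (the pushforward of p along the diagonal) and p⊗p equals 1 − (p⊗p)(Δ), where Δ is the diagonal; equivalently it equals 1 − ∑_{x atom of p} p({x})². -/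
open MeasureTheory
open scoped ENNReal

/-- Total variation distance between two measures: supremum over measurable sets
of the absolute difference of the measures. -/
noncomputable def tv {Z : Type*} [MeasurableSpace Z] (μ ν : Measure Z) : ℝ :=
  ⨆ S : {S : Set Z // MeasurableSet S}, |(μ S).toReal - (ν S).toReal|

/-- Total variation entropy in the standard Borel case: it equals
`1 − (p⊗p)(Δ)`, which is `1 − ∑ₓ p({x})²`. -/
theorem tv_entropy_standard_borel {X : Type*} [MeasurableSpace X]
    [StandardBorelSpace X] (p : Measure X) [IsProbabilityMeasure p] :
    tv (p.map (fun x => (x, x))) (p.prod p)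
        = 1 - ((p.prod p) (Set.diagonal X)).toReal ∧
      tv (p.map (fun x => (x, x))) (p.prod p)
        = 1 - ∑' x : X, (p {x}).toReal ^ 2 := by
  letI := upgradeStandardBorel X
  have hΔ : MeasurableSet (Set.diagonal X) := isClosed_diagonal.measurableSet
  set μ : Measure (X × X) := p.map (fun x => (x, x)) with hμdef
  set ν : Measure (X × X) := p.prod p with hνdef
  have hdiag : Measurable (fun x : X => (x, x)) := measurable_id.prodMk measurable_id
  set f : X → ℝ≥0∞ := fun x => p {x} with hfdef
  have hf_le_one : ∀ x, f x ≤ 1 := fun x => prob_le_one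
  have hpre : ∀ x : X, Prod.mk x ⁻¹' (Set.diagonal X) = {x} := by
    intro x; ext y; simp [Set.diagonal, eq_comm]
  have hf : Measurable f := by
    have h : f = fun x => p (Prod.mk x ⁻¹' (Set.diagonal X)) :=
      funext fun x => by rw [hpre]
    rw [h]
    exact measurable_measure_prodMk_left hΔ
  have hνΔ : ν (Set.diagonal X) = ∫⁻ x, f x ∂p := by
    rw [hνdef, Measure.prod_apply hΔ]
    exact lintegral_congr fun x => by rw [hpre]
  have hνΔ_le : ν (Set.diagonal X) ≤ 1 := prob_le_one
  have hνΔ_ne : ν (Set.diagonal X) ≠ ∞ := (lt_of_le_of_lt hνΔ_le ENNReal.one_lt_top).ne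
  set e : ℝ≥0∞ := 1 - ν (Set.diagonal X) with hedef
  have he_ne : e ≠ ∞ := by
    rw [hedef]; exact (lt_of_le_of_lt tsub_le_self ENNReal.one_lt_top).ne
  have he_toReal : e.toReal = 1 - (ν (Set.diagonal X)).toReal := by
    rw [hedef, ENNReal.toReal_sub_of_le hνΔ_le ENNReal.one_ne_top, ENNReal.toReal_one]
  -- the bound for every measurable set
  have key : ∀ S : Set (X × X), MeasurableSet S →
      |(μ S).toReal - (ν S).toReal| ≤ e.toReal := by
    intro S hS
    set B : Set X := (fun x : X => (x, x)) ⁻¹' S with hBdef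
    have hB : MeasurableSet B := hdiag hS
    have hμS : μ S = p B := Measure.map_apply hdiag hS
    have hpreS : ∀ x : X, Prod.mk x ⁻¹' (S ∩ Set.diagonal X) = (Prod.mk x ⁻¹' S) ∩ {x} := by
      intro x; rw [Set.preimage_inter, hpre]
    have hSΔ : ν (S ∩ Set.diagonal X) = ∫⁻ x, B.indicator f x ∂p := by
      rw [hνdef, Measure.prod_apply (hS.inter hΔ)]
      refine lintegral_congr fun x => ?_
      rw [hpreS]
      by_cases hx : x ∈ B
      · have : (Prod.mk x ⁻¹' S) ∩ {x} = {x} := by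
          apply Set.inter_eq_self_of_subset_right
          intro y hy
          simp only [Set.mem_singleton_iff] at hy
          subst hy; exact hx
        rw [this, Set.indicator_of_mem hx]
      · have : (Prod.mk x ⁻¹' S) ∩ {x} = ∅ := by
          ext y
          simp only [Set.mem_inter_iff, Set.mem_singleton_iff, Set.mem_empty_iff_false,
            iff_false, not_and]
          rintro hy rfl; exact hx hy
        rw [this, Set.indicator_of_notMem hx, measure_empty]
    have hpB : p B = ∫⁻ x, B.indicator 1 x ∂p := (lintegral_indicator_one hB).symm
    -- claim 1 : μ S ≤ ν S + e
    have claim1 : μ S ≤ ν S + e := by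
      have hkey : p B + ν (Set.diagonal X) ≤ ν (S ∩ Set.diagonal X) + 1 := by
        rw [hpB, hνΔ, hSΔ, ← lintegral_add_left (measurable_one.indicator hB) f,
          show (∫⁻ x, B.indicator f x ∂p) + 1 = ∫⁻ x, B.indicator f x + 1 ∂p from by
            rw [lintegral_add_right _ measurable_const, lintegral_one, measure_univ]]
        refine lintegral_mono fun x => ?_
        by_cases hx : x ∈ B
        · simp [Set.indicator_of_mem hx, add_comm]
        · simp only [Set.indicator_of_notMem hx, zero_add, Pi.one_apply]
          exact hf_le_one x
      have hsplit : ν (S ∩ Set.diagonal X) + 1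
          = (ν (S ∩ Set.diagonal X) + e) + ν (Set.diagonal X) := by
        rw [add_assoc, hedef, tsub_add_cancel_of_le hνΔ_le]
      rw [hsplit] at hkey
      have := (ENNReal.add_le_add_iff_right hνΔ_ne).mp hkey
      calc μ S = p B := hμS
        _ ≤ ν (S ∩ Set.diagonal X) + e := this
        _ ≤ ν S + e := add_le_add_left (measure_mono Set.inter_subset_left) e
    -- claim 2 : ν S ≤ μ S + e
    have claim2 : ν S ≤ μ S + e := by
      have h1 : ν (S ∩ Set.diagonal X) ≤ μ S := by
        rw [hSΔ, hμS, hpB]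
        refine lintegral_mono fun x => ?_
        by_cases hx : x ∈ B
        · simp [Set.indicator_of_mem hx, hf_le_one x]
        · simp [Set.indicator_of_notMem hx]
      have h2 : ν (S \ Set.diagonal X) ≤ e := by
        calc ν (S \ Set.diagonal X) ≤ ν (Set.diagonal X)ᶜ :=
              measure_mono (Set.diff_subset_compl _ _)
          _ = e := by rw [hedef, prob_compl_eq_one_sub hΔ]
      calc ν S = ν (S ∩ Set.diagonal X) + ν (S \ Set.diagonal X) :=
            (measure_inter_add_diff S hΔ).symm
        _ ≤ μ S + e := add_le_add h1 h2
    have hμS_ne : μ S ≠ ∞ := by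
      rw [hμS]; exact (measure_lt_top p B).ne
    have hνS_ne : ν S ≠ ∞ := (measure_lt_top ν S).ne
    rw [abs_sub_le_iff]
    constructor
    · have := ENNReal.toReal_mono (by finiteness) claim1
      rw [ENNReal.toReal_add hνS_ne he_ne] at this
      linarith
    · have := ENNReal.toReal_mono (by finiteness) claim2
      rw [ENNReal.toReal_add hμS_ne he_ne] at this
      linarith
  -- value at the diagonal
  have hμΔ : μ (Set.diagonal X) = 1 := by
    rw [hμdef, Measure.map_apply hdiag hΔ]
    have : (fun x : X => (x, x)) ⁻¹' (Set.diagonal X) = Set.univ := by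
      ext x; simp [Set.diagonal]
    rw [this, measure_univ]
  have hval : |(μ (Set.diagonal X)).toReal - (ν (Set.diagonal X)).toReal| = e.toReal := by
    rw [hμΔ, ENNReal.toReal_one, he_toReal, abs_of_nonneg]
    have : (ν (Set.diagonal X)).toReal ≤ 1 := by
      rw [← ENNReal.toReal_one]
      exact ENNReal.toReal_mono ENNReal.one_ne_top hνΔ_le
    linarith
  have htv : tv μ ν = e.toReal := by
    refine le_antisymm (ciSup_le fun S => key S.1 S.2) ?_
    have hbdd : BddAbove (Set.range fun S : {S : Set (X × X) // MeasurableSet S} =>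
        |(μ S.1).toReal - (ν S.1).toReal|) := by
      refine ⟨e.toReal, ?_⟩
      rintro x ⟨S, rfl⟩
      exact key S.1 S.2
    have := le_ciSup hbdd (⟨Set.diagonal X, hΔ⟩ : {S : Set (X × X) // MeasurableSet S})
    rw [hval] at this
    exact this
  constructor
  · rw [htv, he_toReal]
  · rw [htv, he_toReal]
    congr 1
    -- ν Δ = ∑ p{x}²
    have hsum : ν (Set.diagonal X) = ∑' x : X, f x ^ 2 := by
      rw [hνΔ]
      set A : Set X := {x | 0 < p {x}} with hAdef
      have hAc : A.Countable := by
        have := Measure.countable_meas_level_set_pos (μ := p) (g := id) measurable_id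
        simpa [Set.setOf_eq_eq_singleton'] using this
      have hAm : MeasurableSet A := hAc.measurableSet
      have hsplit : ∫⁻ x, f x ∂p = ∫⁻ x in A, f x ∂p + ∫⁻ x in Aᶜ, f x ∂p :=
        (lintegral_add_compl f hAm).symm
      have hzero : ∫⁻ x in Aᶜ, f x ∂p = 0 := by
        rw [setLIntegral_eq_zero_iff hAm.compl hf]
        filter_upwards with x hx
        simp only [hAdef, Set.mem_compl_iff, Set.mem_setOf_eq, not_lt, le_zero_iff] at hx
        exact hx
      have hA : ∫⁻ x in A, f x ∂p = ∑' a : A, f a * p {(a : X)} :=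
        lintegral_countable f hAc
      rw [hsplit, hzero, add_zero, hA]
      have : ∀ a : A, f a * p {(a : X)} = f (a : X) ^ 2 := by
        intro a; simp [hfdef, sq]
      rw [tsum_congr this]
      refine tsum_subtype_eq_of_support_subset (f := fun x => f x ^ 2) ?_
      intro x hx
      simp only [Function.mem_support, ne_eq, pow_eq_zero_iff] at hx
      simp only [hAdef, Set.mem_setOf_eq, pos_iff_ne_zero]
      intro h0
      exact hx (by simp [hfdef, h0])
    rw [hsum, ENNReal.tsum_toReal_eq]
    · exact tsum_congr fun x => by rw [ENNReal.toReal_pow]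
    · intro x
      exact (lt_of_le_of_lt (pow_le_one' (hf_le_one x) 2) ENNReal.one_lt_top).ne
end
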